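/- Let θ, θ' be independent random vectors each uniform on {−1,1}^d, and let H be a d×d real positive semidefinite matrix. Then for all λ with 0 ≤ λ < 1/(2ρ(H)), one has log E[exp(λ θᵀ H θ')] ≤ (λ²/2) · ‖H‖_F² / (1 − 4λ²ρ(H)²), where ρ(H) is the spectral radius of H and ‖H‖_F its Frobenius norm. -/

import Mathlib

/-- The real ±1 value encoded by a boolean. -/
noncomputable def sgn (b : Bool) : ℝ := if b then 1 else -1

open Real MeasureTheory Matrix Finset

lemma aux_ig1 (a : ℝ) : Integrable fun x : ℝ => exp (a*x) * exp (-x^2/2) := by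
  have h : ∀ x : ℝ, exp (a*x) * exp (-x^2/2) = exp (a^2/2) * exp (-(1/2) * (x-a)^2) := by
    intro x; rw [← exp_add, ← exp_add]; congr 1; ring
  simp_rw [h]
  exact ((integrable_exp_neg_mul_sq (by norm_num)).comp_sub_right a).const_mul _

lemma aux_g1 (a : ℝ) : ∫ x : ℝ, exp (a*x) * exp (-x^2/2) = Real.sqrt (2*π) * exp (a^2/2) := by
  have h : ∀ x : ℝ, exp (a*x) * exp (-x^2/2) = exp (a^2/2) * exp (-(1/2) * (x-a)^2) := by
    intro x; rw [← exp_add, ← exp_add]; congr 1; ring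
  simp_rw [h]
  rw [MeasureTheory.integral_const_mul,
    integral_sub_right_eq_self (fun x => exp (-(1/2)*x^2)) a, integral_gaussian,
    show π / (1/2 : ℝ) = 2*π by ring, mul_comm]

lemma aux_ig2 {c : ℝ} (hc : c < 1) : Integrable fun x : ℝ => exp (c*x^2/2) * exp (-x^2/2) := by
  have h : ∀ x : ℝ, exp (c*x^2/2) * exp (-x^2/2) = exp (-((1-c)/2) * x^2) := by
    intro x; rw [← exp_add]; congr 1; ring
  simp_rw [h]
  exact integrable_exp_neg_mul_sq (by linarith)

lemma aux_g2 {c : ℝ} (hc : c < 1) :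
    ∫ x : ℝ, exp (c*x^2/2) * exp (-x^2/2) = Real.sqrt (2*π) * Real.sqrt (1/(1-c)) := by
  have h : ∀ x : ℝ, exp (c*x^2/2) * exp (-x^2/2) = exp (-((1-c)/2) * x^2) := by
    intro x; rw [← exp_add]; congr 1; ring
  simp_rw [h]
  rw [integral_gaussian, show π / ((1-c)/2) = 2*π * (1/(1-c)) by field_simp,
    Real.sqrt_mul (by positivity)]

lemma aux_sqrt_le {y c : ℝ} (h0 : 0 ≤ y) (hyc : y ≤ c) (hc : c < 1) :
    Real.sqrt (1/(1-y)) ≤ exp (y/(2*(1-c))) := by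
  have h1y : 0 < 1 - y := by linarith
  have h1c : 0 < 1 - c := by linarith
  have hpos : (0:ℝ) < 1/(1-y) := by positivity
  have hlog : Real.log (1/(1-y)) ≤ y/(1-c) := by
    have h2 := Real.log_le_sub_one_of_pos hpos
    have h3 : 1/(1-y) - 1 = y/(1-y) := by field_simp; ring
    have h4 : y/(1-y) ≤ y/(1-c) := by gcongr
    linarith
  rw [Real.sqrt_eq_rpow, Real.rpow_def_of_pos hpos]
  rw [Real.exp_le_exp]
  have h5 : y/(2*(1-c)) = y/(1-c)/2 := by rw [div_div, mul_comm]
  rw [h5]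
  linarith

lemma sum_exp_sgn {d : ℕ} (a : Fin d → ℝ) :
    ∑ s : Fin d → Bool, Real.exp (∑ i, sgn (s i) * a i) = ∏ i, (2 * Real.cosh (a i)) := by
  simp_rw [Real.exp_sum]
  rw [← Fintype.prod_sum (fun i b => Real.exp (sgn b * a i))]
  refine Finset.prod_congr rfl fun i _ => ?_
  simp [sgn, Real.cosh_eq]
  ring

lemma prod_cosh_le {d : ℕ} (a : Fin d → ℝ) :
    ∏ i, (2 * Real.cosh (a i)) ≤ 2^d * exp (∑ i, (a i)^2/2) := by
  calc ∏ i, (2 * Real.cosh (a i)) ≤ ∏ i, (2 * exp ((a i)^2/2)) := by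
        refine Finset.prod_le_prod (fun i _ => by positivity) fun i _ => ?_
        have := Real.cosh_le_exp_half_sq (a i)
        linarith
    _ = 2^d * exp (∑ i, (a i)^2/2) := by
        rw [Finset.prod_mul_distrib, Finset.prod_const, ← Real.exp_sum]
        simp

lemma dot_UU {d : ℕ} {U : Matrix (Fin d) (Fin d) ℝ} (hU : Uᵀ * U = 1) (y : Fin d → ℝ) :
    (U *ᵥ y) ⬝ᵥ (U *ᵥ y) = y ⬝ᵥ y := by
  rw [dotProduct_mulVec, ← mulVec_transpose, mulVec_mulVec, hU, one_mulVec]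

lemma quad_decomp {d : ℕ} {H U : Matrix (Fin d) (Fin d) ℝ} {μ : Fin d → ℝ}
    (hU : Uᵀ * U = 1) (hspec : H = U * Matrix.diagonal μ * Uᵀ) (σ : Fin d → ℝ) :
    ∑ i, (∑ j, H i j * σ j)^2 = ∑ k, (μ k * ((Uᵀ *ᵥ σ) k))^2 := by
  have hv : (fun i => ∑ j, H i j * σ j) = H *ᵥ σ := rfl
  have h1 : H *ᵥ σ = U *ᵥ (Matrix.diagonal μ *ᵥ (Uᵀ *ᵥ σ)) := by
    rw [hspec, mulVec_mulVec, mulVec_mulVec]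
  calc ∑ i, (∑ j, H i j * σ j)^2 = (H *ᵥ σ) ⬝ᵥ (H *ᵥ σ) := by
        simp [dotProduct, ← hv, pow_two]
    _ = (Matrix.diagonal μ *ᵥ (Uᵀ *ᵥ σ)) ⬝ᵥ (Matrix.diagonal μ *ᵥ (Uᵀ *ᵥ σ)) := by
        rw [h1, dot_UU hU]
    _ = ∑ k, (μ k * ((Uᵀ *ᵥ σ) k))^2 := by
        simp only [dotProduct, mulVec_diagonal, pow_two]

lemma norm_decomp {d : ℕ} {U : Matrix (Fin d) (Fin d) ℝ} (hU : Uᵀ * U = 1) (y : Fin d → ℝ) :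
    ∑ i, ((U *ᵥ y) i)^2 = ∑ k, (y k)^2 := by
  have := dot_UU hU y
  simpa [dotProduct, pow_two] using this

lemma lin_decomp {d : ℕ} (U : Matrix (Fin d) (Fin d) ℝ) (a σ : Fin d → ℝ) :
    ∑ k, a k * ((Uᵀ *ᵥ σ) k) = ∑ i, σ i * ((U *ᵥ a) i) := by
  calc ∑ k, a k * ((Uᵀ *ᵥ σ) k) = a ⬝ᵥ (Uᵀ *ᵥ σ) := rfl
    _ = (a ᵥ* Uᵀ) ⬝ᵥ σ := by rw [dotProduct_mulVec]
    _ = (U *ᵥ a) ⬝ᵥ σ := by rw [vecMul_transpose]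
    _ = ∑ i, σ i * ((U *ᵥ a) i) := by rw [dotProduct_comm]; rfl

lemma trace_decomp {d : ℕ} {H U : Matrix (Fin d) (Fin d) ℝ} {μ : Fin d → ℝ}
    (hU : Uᵀ * U = 1) (hspec : H = U * Matrix.diagonal μ * Uᵀ) :
    ∑ k, (μ k)^2 = ∑ i, ∑ j, (H i j)^2 := by
  have hsym : Hᵀ = H := by
    rw [hspec]
    simp [Matrix.transpose_mul, Matrix.transpose_transpose, Matrix.diagonal_transpose,
      Matrix.mul_assoc]
  have h1 : H * H = U * Matrix.diagonal (fun k => μ k * μ k) * Uᵀ := by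
    rw [← Matrix.diagonal_mul_diagonal]
    calc H * H = (U * Matrix.diagonal μ) * ((Uᵀ * U) * (Matrix.diagonal μ * Uᵀ)) := by
          rw [hspec]; noncomm_ring
      _ = _ := by rw [hU, Matrix.one_mul]; noncomm_ring
  have h2 : (H * H).trace = ∑ k, (μ k)^2 := by
    rw [h1, Matrix.mul_assoc, Matrix.trace_mul_comm, Matrix.mul_assoc, hU, Matrix.mul_one,
      Matrix.trace_diagonal]
    exact Finset.sum_congr rfl fun k _ => (pow_two _).symm
  have h3 : (H * H).trace = ∑ i, ∑ j, (H i j)^2 := by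
    simp only [Matrix.trace, Matrix.diag_apply, Matrix.mul_apply]
    refine Finset.sum_congr rfl fun i _ => Finset.sum_congr rfl fun j _ => ?_
    have h4 : H j i = H i j := by rw [← Matrix.transpose_apply H i j, hsym]
    rw [h4, pow_two]
  rw [← h2, h3]

lemma exp_sq_eq_integral {d : ℕ} (c : Fin d → ℝ) :
    Real.exp (∑ k, (c k)^2/2)
      = (∫ g : Fin d → ℝ, ∏ k, (Real.exp (c k * g k) * Real.exp (-(g k)^2/2)))
          / (Real.sqrt (2*π))^d := by
  rw [integral_fintype_prod_volume_eq_prod (ι := Fin d) (fun k t => Real.exp (c k * t) * Real.exp (-t^2/2))]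
  have h : ∏ k, ∫ t : ℝ, Real.exp (c k * t) * Real.exp (-t^2/2)
      = ∏ k, (Real.sqrt (2*π) * Real.exp ((c k)^2/2)) :=
    Finset.prod_congr rfl fun k _ => aux_g1 _
  rw [h, Finset.prod_mul_distrib, Finset.prod_const, Finset.card_univ, Fintype.card_fin,
    ← Real.exp_sum, mul_comm, mul_div_assoc, div_self (by positivity), mul_one]

lemma stepA {d : ℕ} {H U : Matrix (Fin d) (Fin d) ℝ} {μ : Fin d → ℝ} (lam : ℝ)
    (hU : Uᵀ * U = 1) (hspec : H = U * Matrix.diagonal μ * Uᵀ) (s' : Fin d → Bool) :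
    ∑ i, (lam * ∑ j, H i j * sgn (s' j))^2/2
      = ∑ k, (lam * (μ k * (Uᵀ *ᵥ fun j => sgn (s' j)) k))^2/2 := by
  have h := quad_decomp hU hspec (fun j => sgn (s' j))
  calc ∑ i, (lam * ∑ j, H i j * sgn (s' j))^2/2
      = lam^2/2 * ∑ i, (∑ j, H i j * sgn (s' j))^2 := by
        rw [Finset.mul_sum]; exact Finset.sum_congr rfl fun i _ => by ring
    _ = lam^2/2 * ∑ k, (μ k * (Uᵀ *ᵥ fun j => sgn (s' j)) k)^2 := by rw [h]
    _ = ∑ k, (lam * (μ k * (Uᵀ *ᵥ fun j => sgn (s' j)) k))^2/2 := by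
        rw [Finset.mul_sum]; exact Finset.sum_congr rfl fun k _ => by ring

lemma sum_prod_exp_le {d : ℕ} (lam : ℝ) (U : Matrix (Fin d) (Fin d) ℝ) (μ : Fin d → ℝ)
    (hU : Uᵀ * U = 1) (g : Fin d → ℝ) :
    ∑ s' : Fin d → Bool, ∏ k, (Real.exp ((lam * (μ k * (Uᵀ *ᵥ fun j => sgn (s' j)) k)) * g k)
        * Real.exp (-(g k)^2/2))
      ≤ 2^d * ∏ k, (Real.exp ((lam * μ k)^2 * (g k)^2/2) * Real.exp (-(g k)^2/2)) := by
  have W0 : (0:ℝ) ≤ ∏ k, Real.exp (-(g k)^2/2) := Finset.prod_nonneg fun k _ => (exp_pos _).le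
  have key : ∀ s' : Fin d → Bool,
      ∏ k, (Real.exp ((lam * (μ k * (Uᵀ *ᵥ fun j => sgn (s' j)) k)) * g k)
          * Real.exp (-(g k)^2/2))
        = Real.exp (∑ i, sgn (s' i) * (lam * (U *ᵥ fun k => μ k * g k) i))
            * ∏ k, Real.exp (-(g k)^2/2) := by
    intro s'
    rw [Finset.prod_mul_distrib]
    congr 1
    rw [← Real.exp_sum]
    congr 1
    calc ∑ k, (lam * (μ k * (Uᵀ *ᵥ fun j => sgn (s' j)) k)) * g k
        = lam * ∑ k, (μ k * g k) * ((Uᵀ *ᵥ fun j => sgn (s' j)) k) := by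
          rw [Finset.mul_sum]; exact Finset.sum_congr rfl fun k _ => by ring
      _ = lam * ∑ i, sgn (s' i) * ((U *ᵥ fun k => μ k * g k) i) := by
          rw [lin_decomp U (fun k => μ k * g k) (fun j => sgn (s' j))]
      _ = ∑ i, sgn (s' i) * (lam * (U *ᵥ fun k => μ k * g k) i) := by
          rw [Finset.mul_sum]; exact Finset.sum_congr rfl fun i _ => by ring
  have h2 : ∑ i, (lam * (U *ᵥ fun k => μ k * g k) i)^2/2
      = ∑ k, (lam*μ k)^2 * (g k)^2/2 := by
    have e1 : ∀ c A : ℝ, (c * A)^2/2 = c^2/2 * A^2 := fun c A => by ring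
    simp only [e1]
    rw [← Finset.mul_sum, norm_decomp hU (fun k => μ k * g k), Finset.mul_sum]
    exact Finset.sum_congr rfl fun k _ => by ring
  simp_rw [key]
  rw [← Finset.sum_mul, sum_exp_sgn]
  refine le_trans (mul_le_mul_of_nonneg_right (prod_cosh_le _) W0) ?_
  rw [h2, Finset.prod_mul_distrib, ← Real.exp_sum, ← Real.exp_sum]
  apply le_of_eq
  ring

/-- MGF bound for the decoupled Rademacher chaos `θᵀ H θ'` with `H` PSD:
`log E[exp(λ θᵀHθ')] ≤ (λ²/2) ‖H‖_F² / (1 − 4λ²ρ(H)²)` for `0 ≤ λ < 1/(2ρ(H))`. -/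
theorem rademacher_chaos_mgf_bound {d : ℕ} (hd : 0 < d)
    (H : Matrix (Fin d) (Fin d) ℝ) (hH : H.PosSemidef)
    (ρ : ℝ) (hρ : ρ = ⨆ i, |hH.1.eigenvalues i|)
    (lam : ℝ) (hl0 : 0 ≤ lam) (hl : lam < 1 / (2 * ρ)) :
    Real.log ((∑ s : Fin d → Bool, ∑ s' : Fin d → Bool,
        Real.exp (lam * ∑ i, ∑ j, sgn (s i) * H i j * sgn (s' j))) / (2 ^ d * 2 ^ d))
      ≤ lam ^ 2 / 2 * (∑ i, ∑ j, (H i j) ^ 2) / (1 - 4 * lam ^ 2 * ρ ^ 2) := by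
  haveI : Nonempty (Fin d) := ⟨⟨0, hd⟩⟩
  obtain ⟨U, μ, hU, hspec, hμρ⟩ :
      ∃ (U : Matrix (Fin d) (Fin d) ℝ) (μ : Fin d → ℝ),
        Uᵀ * U = 1 ∧ H = U * Matrix.diagonal μ * Uᵀ ∧ ∀ k, |μ k| ≤ ρ := by
    refine ⟨hH.1.eigenvectorUnitary, hH.1.eigenvalues, ?_, ?_, ?_⟩
    · have h := Matrix.mem_unitaryGroup_iff'.mp (hH.1.eigenvectorUnitary).2
      rwa [Matrix.star_eq_conjTranspose, Matrix.conjTranspose_eq_transpose_of_trivial] at h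
    · simpa [Matrix.star_eq_conjTranspose, Matrix.conjTranspose_eq_transpose_of_trivial] using hH.1.spectral_theorem
    · intro k
      exact hρ ▸ le_ciSup (f := fun i => |hH.1.eigenvalues i|)
        (Set.Finite.bddAbove (Set.finite_range _)) k
  clear hρ
  have hρ0 : 0 ≤ ρ := le_trans (abs_nonneg _) (hμρ ⟨0, hd⟩)
  have hρpos : 0 < ρ := by
    rcases hρ0.eq_or_lt with h | h
    · exfalso; rw [← h] at hl; norm_num at hl; linarith
    · exact h
  have h2lr : 2 * lam * ρ < 1 := by
    have := (lt_div_iff₀ (by positivity : (0:ℝ) < 2 * ρ)).mp hl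
    linarith
  have hc : 4 * lam ^ 2 * ρ ^ 2 < 1 := by
    nlinarith [mul_nonneg (mul_nonneg hl0 hl0) (mul_nonneg hρ0 hρ0), mul_pos hρpos hρpos,
      mul_nonneg hl0 hρ0]
  have hc0 : 0 < 1 - 4 * lam ^ 2 * ρ ^ 2 := by linarith
  have hck : ∀ k, (lam * μ k) ^ 2 ≤ 4 * lam ^ 2 * ρ ^ 2 := by
    intro k
    have h1 : |lam * μ k| ≤ lam * ρ := by
      rw [abs_mul, abs_of_nonneg hl0]
      exact mul_le_mul_of_nonneg_left (hμρ k) hl0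
    nlinarith [abs_nonneg (lam * μ k), sq_abs (lam * μ k)]
  have hck1 : ∀ k, (lam * μ k) ^ 2 < 1 := fun k => lt_of_le_of_lt (hck k) hc
  set T : ℝ := ∑ s : Fin d → Bool, ∑ s' : Fin d → Bool,
      Real.exp (lam * ∑ i, ∑ j, sgn (s i) * H i j * sgn (s' j)) with hT
  have hTpos : 0 < T :=
    Finset.sum_pos (fun s _ => Finset.sum_pos (fun s' _ => Real.exp_pos _) Finset.univ_nonempty)
      Finset.univ_nonempty
  have hFint : ∀ s' : Fin d → Bool, Integrable (fun g : Fin d → ℝ =>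
      ∏ k, (Real.exp ((lam * (μ k * (Uᵀ *ᵥ fun j => sgn (s' j)) k)) * g k)
        * Real.exp (-(g k)^2/2))) := fun s' =>
    Integrable.fintype_prod (fun k => aux_ig1 _)
  have hMint : Integrable (fun g : Fin d → ℝ =>
      ∏ k, (Real.exp ((lam * μ k)^2 * (g k)^2/2) * Real.exp (-(g k)^2/2))) :=
    Integrable.fintype_prod (fun k => aux_ig2 (hck1 k))
  have key : T ≤ Real.exp (lam ^ 2 / 2 * (∑ i, ∑ j, (H i j) ^ 2)
      / (1 - 4 * lam ^ 2 * ρ ^ 2)) * (2 ^ d * 2 ^ d) := by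
    calc T = ∑ s' : Fin d → Bool, ∑ s : Fin d → Bool,
          Real.exp (lam * ∑ i, ∑ j, sgn (s i) * H i j * sgn (s' j)) := by
          rw [hT]; exact Finset.sum_comm
      _ = ∑ s' : Fin d → Bool, ∏ i, (2 * Real.cosh (lam * ∑ j, H i j * sgn (s' j))) := by
          refine Finset.sum_congr rfl fun s' _ => ?_
          rw [← sum_exp_sgn (fun i => lam * ∑ j, H i j * sgn (s' j))]
          refine Finset.sum_congr rfl fun s _ => ?_
          congr 1
          simp only [Finset.mul_sum]
          exact Finset.sum_congr rfl fun i _ => Finset.sum_congr rfl fun j _ => by ring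
      _ ≤ ∑ s' : Fin d → Bool, 2^d * Real.exp (∑ i, (lam * ∑ j, H i j * sgn (s' j))^2/2) :=
          Finset.sum_le_sum fun s' _ => prod_cosh_le _
      _ = 2^d * ∑ s' : Fin d → Bool, Real.exp (∑ i, (lam * ∑ j, H i j * sgn (s' j))^2/2) := by
          rw [Finset.mul_sum]
      _ = 2^d * ∑ s' : Fin d → Bool,
            ((∫ g : Fin d → ℝ, ∏ k, (Real.exp ((lam * (μ k * (Uᵀ *ᵥ fun j => sgn (s' j)) k)) * g k)
              * Real.exp (-(g k)^2/2))) / (Real.sqrt (2*π))^d) := by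
          refine congrArg _ (Finset.sum_congr rfl fun s' _ => ?_)
          rw [stepA lam hU hspec s']
          exact exp_sq_eq_integral _
      _ = 2^d * ((∑ s' : Fin d → Bool, ∫ g : Fin d → ℝ,
            ∏ k, (Real.exp ((lam * (μ k * (Uᵀ *ᵥ fun j => sgn (s' j)) k)) * g k)
              * Real.exp (-(g k)^2/2))) / (Real.sqrt (2*π))^d) := by
          rw [Finset.sum_div]
      _ = 2^d * ((∫ g : Fin d → ℝ, ∑ s' : Fin d → Bool,
            ∏ k, (Real.exp ((lam * (μ k * (Uᵀ *ᵥ fun j => sgn (s' j)) k)) * g k)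
              * Real.exp (-(g k)^2/2))) / (Real.sqrt (2*π))^d) := by
          rw [integral_finset_sum Finset.univ (fun s' _ => hFint s')]
      _ ≤ 2^d * ((∫ g : Fin d → ℝ, 2^d *
            ∏ k, (Real.exp ((lam * μ k)^2 * (g k)^2/2) * Real.exp (-(g k)^2/2)))
              / (Real.sqrt (2*π))^d) := by
          gcongr
          · exact integrable_finset_sum Finset.univ (fun s' _ => hFint s')
          · exact hMint.const_mul _
          · exact fun g => sum_prod_exp_le lam U μ hU g
      _ = 2^d * ((2^d * ∏ k, (Real.sqrt (2*π) * Real.sqrt (1/(1-(lam * μ k)^2))))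
            / (Real.sqrt (2*π))^d) := by
          rw [MeasureTheory.integral_const_mul,
            integral_fintype_prod_volume_eq_prod (ι := Fin d)
              (fun k t => Real.exp ((lam * μ k)^2 * t^2/2) * Real.exp (-t^2/2))]
          rw [Finset.prod_congr rfl fun k _ => aux_g2 (hck1 k)]
      _ = 2^d * 2^d * ∏ k, Real.sqrt (1/(1-(lam * μ k)^2)) := by
          rw [Finset.prod_mul_distrib, Finset.prod_const, Finset.card_univ, Fintype.card_fin]
          generalize (∏ k : Fin d, Real.sqrt (1/(1-(lam * μ k)^2))) = P
          have hN : ((Real.sqrt (2*π)):ℝ)^d ≠ 0 := by positivity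
          field_simp
      _ ≤ 2^d * 2^d * ∏ k, Real.exp ((lam * μ k)^2/(2*(1 - 4 * lam^2 * ρ^2))) :=
          mul_le_mul_of_nonneg_left
            (Finset.prod_le_prod (fun k _ => Real.sqrt_nonneg _)
              (fun k _ => aux_sqrt_le (sq_nonneg _) (hck k) hc)) (by positivity)
      _ = 2^d * 2^d * Real.exp (∑ k, (lam * μ k)^2/(2*(1 - 4 * lam^2 * ρ^2))) := by
          rw [← Real.exp_sum]
      _ = Real.exp (lam ^ 2 / 2 * (∑ i, ∑ j, (H i j) ^ 2) / (1 - 4 * lam ^ 2 * ρ ^ 2))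
            * (2 ^ d * 2 ^ d) := by
          rw [mul_comm]
          congr 1
          rw [← trace_decomp hU hspec, ← Finset.sum_div,
            show ∑ k, (lam * μ k)^2 = lam^2 * ∑ k, (μ k)^2 from by
              rw [Finset.mul_sum]; exact Finset.sum_congr rfl fun k _ => by ring]
          field_simp
  rw [Real.log_le_iff_le_exp (div_pos hTpos (by positivity))]
  rw [div_le_iff₀ (by positivity)]
  exact key
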